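/- Let x be a chi-squared random variable with N ≥ 2 degrees of freedom. Then for any a > 0, P(x ≤ a) ≤ 2 a^{N/2 − 1} e^{N/2} / N^{(N−1)/2}. -/

import Mathlib

open MeasureTheory ProbabilityTheory

section Helpers
open Real Stirling

lemma sqrt_pi_le_stirlingSeq (n : ℕ) (hn : n ≠ 0) : √π ≤ stirlingSeq n := by
  obtain ⟨m, rfl⟩ := Nat.exists_eq_succ_of_ne_zero hn
  have h1 : Filter.Tendsto (stirlingSeq ∘ Nat.succ) Filter.atTop (nhds (√π)) :=
    tendsto_stirlingSeq_sqrt_pi.comp (Filter.tendsto_add_atTop_nat 1)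
  exact stirlingSeq'_antitone.le_of_tendsto h1 m

lemma fact_lower (n : ℕ) (hn : n ≠ 0) :
    √π * (√(2 * n) * ((n : ℝ) / exp 1) ^ n) ≤ n.factorial := by
  have hD : 0 < √(2 * (n:ℝ)) * ((n : ℝ) / exp 1) ^ n := by
    have : 0 < (n:ℝ) := by exact_mod_cast Nat.pos_of_ne_zero hn
    positivity
  have := sqrt_pi_le_stirlingSeq n hn
  rw [stirlingSeq, le_div_iff₀ hD] at this
  linarith

lemma fact_upper (n : ℕ) (hn : n ≠ 0) :
    (n.factorial : ℝ) ≤ (exp 1 / √2) * (√(2 * n) * ((n : ℝ) / exp 1) ^ n) := by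
  have hD : 0 < √(2 * (n:ℝ)) * ((n : ℝ) / exp 1) ^ n := by
    have : 0 < (n:ℝ) := by exact_mod_cast Nat.pos_of_ne_zero hn
    positivity
  have h : stirlingSeq n ≤ stirlingSeq 1 := by
    obtain ⟨m, rfl⟩ := Nat.exists_eq_succ_of_ne_zero hn
    exact stirlingSeq'_antitone (Nat.zero_le m)
  rw [stirlingSeq_one] at h
  rw [stirlingSeq, div_le_iff₀ hD] at h
  linarith

lemma even_case (k : ℕ) (hk : k ≠ 0) :
    (((k:ℝ)+1) / exp 1) ^ ((k:ℝ) + 1/2) ≤ (k.factorial : ℝ) := by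
  have hk1 : (1:ℝ) ≤ (k:ℝ) := by exact_mod_cast Nat.one_le_iff_ne_zero.mpr hk
  have hk0 : (0:ℝ) < k := by linarith
  have hb : (0:ℝ) < ((k:ℝ)+1) / exp 1 := by positivity
  have e2 := Real.exp_one_lt_d9
  have e1 := Real.exp_one_gt_d9
  have hpi := Real.pi_gt_three
  have hsplit : (((k:ℝ)+1) / exp 1) ^ ((k:ℝ) + 1/2)
      = (((k:ℝ)+1) / exp 1) ^ (k:ℕ) * √(((k:ℝ)+1) / exp 1) := by
    rw [rpow_add hb, rpow_natCast, sqrt_eq_rpow]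
  have key : ((k:ℝ)+1)^(k:ℕ) ≤ exp 1 * (k:ℝ)^(k:ℕ) := by
    have h1 : (k:ℝ)+1 ≤ (k:ℝ) * exp (1/(k:ℝ)) := by
      have h := Real.add_one_le_exp (1/(k:ℝ))
      calc (k:ℝ)+1 = (k:ℝ) * (1/(k:ℝ) + 1) := by field_simp; ring
        _ ≤ (k:ℝ) * exp (1/(k:ℝ)) := mul_le_mul_of_nonneg_left h hk0.le
    calc ((k:ℝ)+1)^(k:ℕ) ≤ ((k:ℝ) * exp (1/(k:ℝ)))^(k:ℕ) :=
          pow_le_pow_left₀ (by positivity) h1 k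
      _ = (k:ℝ)^(k:ℕ) * exp ((k:ℕ) * (1/(k:ℝ))) := by
          rw [mul_pow, Real.exp_nat_mul]
      _ = exp 1 * (k:ℝ)^(k:ℕ) := by
          rw [mul_one_div, div_self (ne_of_gt hk0), mul_comm]
  have h1 : (((k:ℝ)+1) / exp 1) ^ (k:ℕ) ≤ exp 1 * ((k:ℝ)/exp 1) ^ (k:ℕ) := by
    rw [div_pow, div_pow, ← mul_div_assoc]
    exact (div_le_div_iff_of_pos_right (by positivity)).mpr key
  have h2 : exp 1 * √(((k:ℝ)+1) / exp 1) ≤ √π * √(2*(k:ℝ)) := by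
    have hes : √(exp 1) * √(exp 1) = exp 1 := Real.mul_self_sqrt (exp_pos 1).le
    have hl : exp 1 * √(((k:ℝ)+1) / exp 1) = √(exp 1 * ((k:ℝ)+1)) := by
      rw [Real.sqrt_mul (exp_pos 1).le, show ((k:ℝ)+1) / exp 1 = ((k:ℝ)+1) * (exp 1)⁻¹ by ring,
        Real.sqrt_mul (by positivity), Real.sqrt_inv]
      field_simp
      linear_combination (-1) * hes
    have hr : √π * √(2*(k:ℝ)) = √(π * (2*(k:ℝ))) := (Real.sqrt_mul pi_pos.le _).symm
    rw [hl, hr]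
    apply Real.sqrt_le_sqrt
    nlinarith
  calc (((k:ℝ)+1) / exp 1) ^ ((k:ℝ) + 1/2)
      = (((k:ℝ)+1) / exp 1) ^ (k:ℕ) * √(((k:ℝ)+1) / exp 1) := hsplit
    _ ≤ (exp 1 * ((k:ℝ)/exp 1) ^ (k:ℕ)) * √(((k:ℝ)+1) / exp 1) :=
        mul_le_mul_of_nonneg_right h1 (sqrt_nonneg _)
    _ = ((k:ℝ)/exp 1) ^ (k:ℕ) * (exp 1 * √(((k:ℝ)+1) / exp 1)) := by ring
    _ ≤ ((k:ℝ)/exp 1) ^ (k:ℕ) * (√π * √(2*(k:ℝ))) :=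
        mul_le_mul_of_nonneg_left h2 (by positivity)
    _ = √π * (√(2*(k:ℝ)) * ((k:ℝ)/exp 1) ^ (k:ℕ)) := by ring
    _ ≤ (k.factorial : ℝ) := by
        have := fact_lower k hk
        push_cast at this ⊢
        convert this using 4

lemma gamma_half_formula (m : ℕ) (hm : m ≠ 0) :
    Real.Gamma ((m:ℝ) + 1/2) = ((2*m).factorial : ℝ) * √π / (4^m * m.factorial) := by
  obtain ⟨j, rfl⟩ := Nat.exists_eq_succ_of_ne_zero hm
  have dup := Real.Gamma_mul_Gamma_add_half ((j:ℝ)+1)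
  have hg1 : Real.Gamma ((j:ℝ)+1) = j.factorial := Real.Gamma_nat_eq_factorial j
  have hg2 : Real.Gamma (2*((j:ℝ)+1)) = (2*j+1).factorial := by
    rw [show 2*((j:ℝ)+1) = ((2*j+1:ℕ):ℝ)+1 by push_cast; ring]
    exact_mod_cast Real.Gamma_nat_eq_factorial (2*j+1)
  have h4 : (2:ℝ) ^ ((1:ℝ) - 2*((j:ℝ)+1)) = 2 / 4^(j+1) := by
    rw [Real.rpow_sub two_pos, Real.rpow_one]
    congr 1
    rw [show (2:ℝ)*((j:ℝ)+1) = ((2*(j+1):ℕ):ℝ) by push_cast; ring, Real.rpow_natCast, pow_mul]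
    norm_num
  rw [hg1, hg2, h4] at dup
  have hfj : (0:ℝ) < j.factorial := by exact_mod_cast j.factorial_pos
  have hcast : ((2*(j+1)).factorial : ℝ) = (2*(j:ℝ)+2) * ((2*j+1).factorial : ℝ) := by
    rw [show 2*(j+1) = (2*j+1)+1 by ring, Nat.factorial_succ]
    push_cast; ring
  have hcast2 : ((j+1).factorial : ℝ) = ((j:ℝ)+1) * (j.factorial : ℝ) := by
    rw [Nat.factorial_succ]; push_cast; ring
  have h2 : ((j:ℕ):ℝ)+1 = (((j+1:ℕ)):ℝ) := by push_cast; ring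
  rw [h2] at dup
  push_cast [hcast, hcast2]
  push_cast at dup
  have h4pos : (0:ℝ) < 4^(j+1) := by positivity
  field_simp
  field_simp at dup
  simp only [Nat.succ_eq_add_one]
  nlinarith [dup, hfj, Real.sqrt_nonneg π, h4pos]

lemma odd_case (m : ℕ) (hm : m ≠ 0) :
    ((2*(m:ℝ)+1) / (2 * exp 1)) ^ (m:ℕ) ≤ Real.Gamma ((m:ℝ) + 1/2) := by
  have hm1 : (1:ℝ) ≤ (m:ℝ) := by exact_mod_cast Nat.one_le_iff_ne_zero.mpr hm
  have hm0 : (0:ℝ) < m := by linarith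
  have e2 := Real.exp_one_lt_d9
  have e1 := Real.exp_one_gt_d9
  have hpi := Real.pi_gt_d6
  rw [gamma_half_formula m hm]
  have fl := fact_lower (2*m) (by omega)
  have fu := fact_upper m hm
  -- A = √(2*(2m)) * ((2m)/e)^(2m) = √2 * (√(2m) * (m/e)^m) * (4^m * (m/e)^m)
  have hA : √(2 * ((2*m:ℕ):ℝ)) * (((2*m:ℕ):ℝ) / exp 1) ^ (2*m)
      = √2 * (√(2*(m:ℝ)) * ((m:ℝ)/exp 1)^m) * (4^m * ((m:ℝ)/exp 1)^m) := by
    have hs : √(2 * ((2*m:ℕ):ℝ)) = √2 * √(2*(m:ℝ)) := by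
      rw [show 2 * ((2*m:ℕ):ℝ) = 2 * (2*(m:ℝ)) by push_cast; ring,
        Real.sqrt_mul (by norm_num)]
    have hp : (((2*m:ℕ):ℝ) / exp 1) ^ (2*m) = 4^m * (((m:ℝ)/exp 1)^m)^2 := by
      rw [show ((2*m:ℕ):ℝ)/exp 1 = 2 * ((m:ℝ)/exp 1) by push_cast; ring, mul_pow,
        pow_mul, pow_mul]
      ring
    rw [hs, hp]; ring
  rw [hA] at fl
  -- lower bound the quotient
  have hB : (0:ℝ) < √(2*(m:ℝ)) * ((m:ℝ)/exp 1)^m := by positivity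
  have hfm : (0:ℝ) < (m.factorial : ℝ) := by exact_mod_cast m.factorial_pos
  have hden : (0:ℝ) < 4^m * (m.factorial:ℝ) := by positivity
  have step : (2*π/exp 1) * ((m:ℝ)/exp 1)^m ≤ ((2*m).factorial : ℝ) * √π / (4^m * m.factorial) := by
    rw [le_div_iff₀ hden]
    have hsqrt2 : √2 * √2 = 2 := Real.mul_self_sqrt (by norm_num)
    have hsqpi : √π * √π = π := Real.mul_self_sqrt pi_pos.le
    set B := √(2*(m:ℝ)) * ((m:ℝ)/exp 1)^m with hBdef
    set C := (4:ℝ)^m * ((m:ℝ)/exp 1)^m with hCdef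
    have fl' : π * √2 * B * C ≤ ((2*m).factorial : ℝ) * √π := by
      have h := mul_le_mul_of_nonneg_left fl (Real.sqrt_nonneg π)
      calc π * √2 * B * C = √π * (√π * (√2 * B * C)) := by
            linear_combination (-(√2*B*C)) * hsqpi
        _ ≤ √π * ((2*m).factorial : ℝ) := h
        _ = ((2*m).factorial : ℝ) * √π := mul_comm _ _
    have fu' : (2*π/exp 1) * ((m:ℝ)/exp 1)^m * (4^m * (m.factorial:ℝ)) ≤ π * √2 * B * C := by
      have h := mul_le_mul_of_nonneg_left fu
        (show (0:ℝ) ≤ (2*π/exp 1) * ((m:ℝ)/exp 1)^m * 4^m by positivity)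
      calc (2*π/exp 1) * ((m:ℝ)/exp 1)^m * (4^m * (m.factorial:ℝ))
          = (2*π/exp 1) * ((m:ℝ)/exp 1)^m * 4^m * (m.factorial:ℝ) := by ring
        _ ≤ (2*π/exp 1) * ((m:ℝ)/exp 1)^m * 4^m * ((exp 1/√2) * B) := h
        _ = ((2*π/exp 1) * (exp 1/√2)) * (((m:ℝ)/exp 1)^m * 4^m * B) := by ring
        _ = π * √2 * B * C := by
            have h3 : (2*π/exp 1) * (exp 1/√2) = π * √2 := by
              have h2 : √2 ≠ 0 := by positivity
              field_simp
              linear_combination (-1) * hsqrt2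
            rw [h3, hCdef]; ring
    exact le_trans fu' fl'
  refine le_trans ?_ step
  -- ((2m+1)/(2e))^m ≤ (2π/e) (m/e)^m
  have hsplit : ((2*(m:ℝ)+1) / (2 * exp 1)) = ((2*(m:ℝ)+1)/(2*(m:ℝ))) * ((m:ℝ)/exp 1) := by
    field_simp
  rw [hsplit, mul_pow]
  have hexp : ((2*(m:ℝ)+1)/(2*(m:ℝ)))^(m:ℕ) ≤ exp (1/2) := by
    have h1 : (2*(m:ℝ)+1)/(2*(m:ℝ)) ≤ exp (1/(2*(m:ℝ))) := by
      have h := Real.add_one_le_exp (1/(2*(m:ℝ)))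
      rw [div_le_iff₀ (by positivity)]
      calc 2*(m:ℝ)+1 = (1/(2*(m:ℝ)) + 1) * (2*(m:ℝ)) := by field_simp; ring
        _ ≤ exp (1/(2*(m:ℝ))) * (2*(m:ℝ)) := mul_le_mul_of_nonneg_right h (by positivity)
    calc ((2*(m:ℝ)+1)/(2*(m:ℝ)))^(m:ℕ) ≤ (exp (1/(2*(m:ℝ))))^(m:ℕ) :=
          pow_le_pow_left₀ (by positivity) h1 m
      _ = exp ((m:ℕ) * (1/(2*(m:ℝ)))) := (Real.exp_nat_mul _ m).symm
      _ = exp (1/2) := by rw [mul_one_div]; congr 1; field_simp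
  have hfin : exp (1/2) ≤ 2*π/exp 1 := by
    have hh : exp (1/2) * exp (1/2) = exp 1 := by rw [← Real.exp_add]; norm_num
    rw [le_div_iff₀ (exp_pos 1)]
    nlinarith [exp_pos (1/2), sq_nonneg (exp (1/2) - 5/3)]
  calc ((2*(m:ℝ)+1)/(2*(m:ℝ)))^(m:ℕ) * ((m:ℝ)/exp 1)^(m:ℕ)
      ≤ exp (1/2) * ((m:ℝ)/exp 1)^(m:ℕ) := mul_le_mul_of_nonneg_right hexp (by positivity)
    _ ≤ (2*π/exp 1) * ((m:ℝ)/exp 1)^(m:ℕ) := mul_le_mul_of_nonneg_right hfin (by positivity)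

lemma gamma_lb (N : ℕ) (hN : 2 ≤ N) :
    ((N:ℝ)/(2*exp 1)) ^ (((N:ℝ)-1)/2) ≤ Real.Gamma ((N:ℝ)/2) := by
  rcases Nat.even_or_odd N with ⟨m, hm⟩ | ⟨m, hm⟩
  · -- N = 2m
    have hm1 : 1 ≤ m := by omega
    rcases eq_or_lt_of_le hm1 with h1 | h1
    · -- m = 1, N = 2
      subst hm; rw [← h1]
      norm_num
      have : (2:ℝ)/(2*exp 1) = (exp 1)⁻¹ := by
        field_simp
      rw [this]
      apply Real.rpow_le_one (by positivity) _ (by norm_num)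
      rw [inv_le_one_iff₀]
      right
      linarith [Real.exp_one_gt_d9]
    · obtain ⟨k, rfl⟩ : ∃ k, m = k + 1 := ⟨m-1, by omega⟩
      have hk : k ≠ 0 := by omega
      subst hm
      have hb : ((k+1+(k+1):ℕ):ℝ)/(2*exp 1) = ((k:ℝ)+1)/exp 1 := by
        push_cast; field_simp; ring
      have he : (((k+1+(k+1):ℕ):ℝ)-1)/2 = (k:ℝ)+1/2 := by push_cast; ring
      have hg : ((k+1+(k+1):ℕ):ℝ)/2 = ((k:ℕ):ℝ)+1 := by push_cast; ring
      rw [hb, he, hg, Real.Gamma_nat_eq_factorial]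
      exact even_case k hk
  · -- N = 2m+1
    have hm0 : m ≠ 0 := by omega
    subst hm
    have hb : ((2*m+1:ℕ):ℝ)/(2*exp 1) = (2*(m:ℝ)+1)/(2*exp 1) := by push_cast; ring
    have he : (((2*m+1:ℕ):ℝ)-1)/2 = ((m:ℕ):ℝ) := by push_cast; ring
    have hg : ((2*m+1:ℕ):ℝ)/2 = (m:ℝ)+1/2 := by push_cast; ring
    rw [hb, he, hg, Real.rpow_natCast]
    exact odd_case m hm0

lemma final_real (N : ℕ) (hN : 2 ≤ N) (a : ℝ) (ha : 0 < a) :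
    2 * ((1/2:ℝ)^((N:ℝ)/2) / Real.Gamma ((N:ℝ)/2)) * a^((N:ℝ)/2-1) ≤
      2 * a ^ ((N : ℝ) / 2 - 1) * Real.exp ((N : ℝ) / 2) / (N : ℝ) ^ (((N : ℝ) - 1) / 2) := by
  have hN2 : (2:ℝ) ≤ (N:ℝ) := by exact_mod_cast hN
  have hN0 : (0:ℝ) < (N:ℝ) := by linarith
  have hΓ : 0 < Real.Gamma ((N:ℝ)/2) := Real.Gamma_pos_of_pos (by linarith)
  have hNq : (0:ℝ) < (N:ℝ) ^ (((N:ℝ)-1)/2) := by positivity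
  have h2e : (1:ℝ) < 2 * exp 1 := by nlinarith [Real.exp_one_gt_d9]
  have key : (1/2:ℝ)^((N:ℝ)/2) * (N:ℝ)^(((N:ℝ)-1)/2) ≤
      Real.exp ((N:ℝ)/2) * Real.Gamma ((N:ℝ)/2) := by
    have h1 : ((2:ℝ)*exp 1) ^ (((N:ℝ)-1)/2) ≤ (2*exp 1) ^ ((N:ℝ)/2) :=
      Real.rpow_le_rpow_of_exponent_le h2e.le (by linarith)
    have h2 : ((2:ℝ)*exp 1) ^ ((N:ℝ)/2) = (2:ℝ)^((N:ℝ)/2) * (exp 1)^((N:ℝ)/2) :=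
      Real.mul_rpow (by norm_num) (exp_pos 1).le
    have h3 : (exp 1 : ℝ)^((N:ℝ)/2) = Real.exp ((N:ℝ)/2) := by
      rw [← Real.exp_mul, one_mul]
    have h4 : (1/2:ℝ)^((N:ℝ)/2) * (2:ℝ)^((N:ℝ)/2) = 1 := by
      rw [← Real.mul_rpow (by norm_num) (by norm_num)]
      norm_num
    -- (N/(2e))^q = N^q / (2e)^q
    have h5 : ((N:ℝ)/(2*exp 1)) ^ (((N:ℝ)-1)/2) =
        (N:ℝ)^(((N:ℝ)-1)/2) / ((2:ℝ)*exp 1)^(((N:ℝ)-1)/2) :=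
      Real.div_rpow hN0.le (by positivity) _
    have h6 := gamma_lb N hN
    rw [h5] at h6
    have h2epos : (0:ℝ) < ((2:ℝ)*exp 1)^(((N:ℝ)-1)/2) := by positivity
    -- from h6 : N^q/(2e)^q ≤ Γ, so N^q ≤ Γ * (2e)^q
    rw [div_le_iff₀ h2epos] at h6
    calc (1/2:ℝ)^((N:ℝ)/2) * (N:ℝ)^(((N:ℝ)-1)/2)
        ≤ (1/2:ℝ)^((N:ℝ)/2) * (Real.Gamma ((N:ℝ)/2) * ((2:ℝ)*exp 1)^(((N:ℝ)-1)/2)) := by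
          apply mul_le_mul_of_nonneg_left h6 (by positivity)
      _ ≤ (1/2:ℝ)^((N:ℝ)/2) * (Real.Gamma ((N:ℝ)/2) * ((2:ℝ)*exp 1)^((N:ℝ)/2)) := by
          apply mul_le_mul_of_nonneg_left _ (by positivity)
          exact mul_le_mul_of_nonneg_left h1 hΓ.le
      _ = Real.exp ((N:ℝ)/2) * Real.Gamma ((N:ℝ)/2) := by
          rw [h2, h3]
          calc (1/2:ℝ)^((N:ℝ)/2) * (Real.Gamma ((N:ℝ)/2) * ((2:ℝ)^((N:ℝ)/2) * Real.exp ((N:ℝ)/2)))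
              = ((1/2:ℝ)^((N:ℝ)/2) * (2:ℝ)^((N:ℝ)/2)) * (Real.Gamma ((N:ℝ)/2) * Real.exp ((N:ℝ)/2)) := by
                ring
            _ = Real.exp ((N:ℝ)/2) * Real.Gamma ((N:ℝ)/2) := by rw [h4]; ring
  have hfrac : (1/2:ℝ)^((N:ℝ)/2) / Real.Gamma ((N:ℝ)/2) ≤
      Real.exp ((N:ℝ)/2) / (N:ℝ)^(((N:ℝ)-1)/2) := by
    rw [div_le_div_iff₀ hΓ hNq]
    linarith [key]
  calc 2 * ((1/2:ℝ)^((N:ℝ)/2) / Real.Gamma ((N:ℝ)/2)) * a^((N:ℝ)/2-1)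
      = ((1/2:ℝ)^((N:ℝ)/2) / Real.Gamma ((N:ℝ)/2)) * (2 * a^((N:ℝ)/2-1)) := by ring
    _ ≤ (Real.exp ((N:ℝ)/2) / (N:ℝ)^(((N:ℝ)-1)/2)) * (2 * a^((N:ℝ)/2-1)) := by
        apply mul_le_mul_of_nonneg_right hfrac (by positivity)
    _ = 2 * a ^ ((N : ℝ) / 2 - 1) * Real.exp ((N : ℝ) / 2) / (N : ℝ) ^ (((N : ℝ) - 1) / 2) := by
        ring

end Helpers

/-- Tail (CDF) bound for the chi-squared distribution with `N ≥ 2` degrees of freedom,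
realized as the Gamma distribution with shape `N/2` and rate `1/2`:
`P(x ≤ a) ≤ 2 a^{N/2−1} e^{N/2} / N^{(N−1)/2}` for all `a > 0`. -/
theorem stmt_7 (N : ℕ) (hN : 2 ≤ N) (a : ℝ) (ha : 0 < a) :
    (gammaMeasure ((N : ℝ) / 2) (1 / 2)) (Set.Iic a) ≤
      ENNReal.ofReal
        (2 * a ^ ((N : ℝ) / 2 - 1) * Real.exp ((N : ℝ) / 2) /
          (N : ℝ) ^ (((N : ℝ) - 1) / 2)) := by
  have hN2 : (2:ℝ) ≤ (N:ℝ) := by exact_mod_cast hN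
  have hΓ : 0 < Real.Gamma ((N:ℝ)/2) := Real.Gamma_pos_of_pos (by linarith)
  have hp : (0:ℝ) ≤ (N:ℝ)/2 - 1 := by linarith
  set K : ℝ := 2 * ((1/2:ℝ)^((N:ℝ)/2) / Real.Gamma ((N:ℝ)/2)) * a^((N:ℝ)/2-1) with hKdef
  have hK0 : 0 ≤ K := by positivity
  have hmono : ∀ x ∈ Set.Iic a, gammaPDF ((N:ℝ)/2) (1/2) x ≤
      ENNReal.ofReal K * gammaPDF 1 (1/2) x := by
    intro x hx
    rcases le_or_gt 0 x with hx0 | hx0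
    · rw [gammaPDF_of_nonneg hx0, gammaPDF_of_nonneg hx0, ← ENNReal.ofReal_mul hK0]
      apply ENNReal.ofReal_le_ofReal
      have hxp : x ^ ((N:ℝ)/2-1) ≤ a ^ ((N:ℝ)/2-1) := Real.rpow_le_rpow hx0 hx hp
      have h1 : (1/2:ℝ) ^ (1:ℝ) / Real.Gamma 1 * x ^ ((1:ℝ)-1) * Real.exp (-(1/2*x))
          = 1/2 * Real.exp (-(1/2*x)) := by
        rw [Real.Gamma_one, Real.rpow_one]
        norm_num
      rw [h1]
      have h2 := mul_le_mul_of_nonneg_left hxp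
        (show (0:ℝ) ≤ (1/2:ℝ)^((N:ℝ)/2) / Real.Gamma ((N:ℝ)/2) * Real.exp (-(1/2*x)) by positivity)
      calc (1/2:ℝ)^((N:ℝ)/2) / Real.Gamma ((N:ℝ)/2) * x ^ ((N:ℝ)/2-1) * Real.exp (-(1/2*x))
          = (1/2:ℝ)^((N:ℝ)/2) / Real.Gamma ((N:ℝ)/2) * Real.exp (-(1/2*x)) * x ^ ((N:ℝ)/2-1) := by
            ring
        _ ≤ (1/2:ℝ)^((N:ℝ)/2) / Real.Gamma ((N:ℝ)/2) * Real.exp (-(1/2*x)) * a ^ ((N:ℝ)/2-1) := h2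
        _ = K * (1/2 * Real.exp (-(1/2*x))) := by rw [hKdef]; ring
    · rw [gammaPDF_of_neg hx0]
      exact zero_le
  have hmeas : Measurable fun x => ENNReal.ofReal K * gammaPDF 1 (1/2) x :=
    ((measurable_gammaPDFReal 1 (1/2)).ennreal_ofReal).const_mul _
  calc (gammaMeasure ((N : ℝ) / 2) (1 / 2)) (Set.Iic a)
      = ∫⁻ x in Set.Iic a, gammaPDF ((N:ℝ)/2) (1/2) x := by
        rw [gammaMeasure, withDensity_apply _ measurableSet_Iic]
    _ ≤ ∫⁻ x in Set.Iic a, ENNReal.ofReal K * gammaPDF 1 (1/2) x :=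
        setLIntegral_mono hmeas hmono
    _ ≤ ∫⁻ x, ENNReal.ofReal K * gammaPDF 1 (1/2) x := setLIntegral_le_lintegral _ _
    _ = ENNReal.ofReal K * ∫⁻ x, gammaPDF 1 (1/2) x :=
        lintegral_const_mul _ ((measurable_gammaPDFReal 1 (1/2)).ennreal_ofReal)
    _ = ENNReal.ofReal K := by
        rw [lintegral_gammaPDF_eq_one (by norm_num) (by norm_num), mul_one]
    _ ≤ ENNReal.ofReal (2 * a ^ ((N : ℝ) / 2 - 1) * Real.exp ((N : ℝ) / 2) /
          (N : ℝ) ^ (((N : ℝ) - 1) / 2)) :=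
        ENNReal.ofReal_le_ofReal (final_real N hN a ha)
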